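/- Let T : Fin n → σ be a text, P : Fin m → σ a pattern, and Γ ⊆ σ a set of characters. For each alignment offset i with i + m ≤ n, let M_i = |{ j < m : T(i+j) = P(j) and P(j) ∈ Γ }| be the number of marks at alignment i. Then Σ_i M_i ≤ Σ_{α ∈ Γ} f(α) · F(α), where f(α) = |{ j < m : P(j) = α }| and F(α) = |{ p < n : T(p) = α }|; consequently, for every k ≥ 1, k · |{ i : M_i ≥ k }| ≤ Σ_{α ∈ Γ} f(α) · F(α). (This double-counting bound shows that if the marking phase costs B, at most B/k alignments survive the filter, as used in the analysis of Knapsack k-mismatches.) -/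

import Mathlib

open scoped Classical

/-- The number of marks `M_i` of alignment offset `i`: the number of pattern
positions `j < m` with `T(i+j) = P(j)` and `P(j) ∈ Γ`. (For valid alignments,
`i + m ≤ n`, the bounds check always succeeds.) -/
noncomputable def marks {σ : Type*} {n m : ℕ} (T : Fin n → σ) (P : Fin m → σ)
    (Γ : Finset σ) (i : ℕ) : ℕ :=
  (Finset.univ.filter (fun j : Fin m =>
    if hj : i + j.val < n then T ⟨i + j.val, hj⟩ = P j ∧ P j ∈ Γ else False)).card

/-- double counting of marks. The total number of marks over all
alignments is at most `Σ_{α ∈ Γ} f(α)·F(α)`, where `f` and `F` are the pattern and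
text frequencies; consequently at most `(Σ_{α ∈ Γ} f(α)·F(α))/k` alignments receive
at least `k` marks. -/
theorem marks_double_counting {σ : Type*} [Fintype σ] {n m : ℕ} (hmn : m ≤ n)
    (T : Fin n → σ) (P : Fin m → σ) (Γ : Finset σ) (k : ℕ) (hk : 1 ≤ k) :
    (∑ i ∈ Finset.range (n - m + 1), marks T P Γ i
        ≤ ∑ a ∈ Γ, (Finset.univ.filter (fun j : Fin m => P j = a)).card *
            (Finset.univ.filter (fun p : Fin n => T p = a)).card) ∧
    (k * ((Finset.range (n - m + 1)).filter (fun i => k ≤ marks T P Γ i)).card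
        ≤ ∑ a ∈ Γ, (Finset.univ.filter (fun j : Fin m => P j = a)).card *
            (Finset.univ.filter (fun p : Fin n => T p = a)).card) := by
  have hmain : ∑ i ∈ Finset.range (n - m + 1), marks T P Γ i
      ≤ ∑ a ∈ Γ, (Finset.univ.filter (fun j : Fin m => P j = a)).card *
          (Finset.univ.filter (fun p : Fin n => T p = a)).card := by
    set Spairs : Finset (Fin m × Fin n) :=
      Finset.univ.filter (fun x : Fin m × Fin n => P x.1 ∈ Γ ∧ T x.2 = P x.1) with hS
    have hR : ∑ a ∈ Γ, (Finset.univ.filter (fun j : Fin m => P j = a)).card *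
          (Finset.univ.filter (fun p : Fin n => T p = a)).card = Spairs.card := by
      rw [Finset.card_eq_sum_card_fiberwise
        (f := fun x : Fin m × Fin n => P x.1) (t := Γ)
        (fun x hx => (Finset.mem_filter.mp hx).2.1)]
      refine Finset.sum_congr rfl (fun a ha => ?_)
      rw [← Finset.card_product]
      congr 1
      ext ⟨j, p⟩
      simp only [hS, Finset.mem_filter, Finset.mem_product, Finset.mem_univ, true_and]
      constructor
      · rintro ⟨hPa, hT⟩
        exact ⟨⟨hPa ▸ ha, by rw [hT, hPa]⟩, hPa⟩
      · rintro ⟨⟨hΓ, hT⟩, hPa⟩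
        exact ⟨hPa, hPa ▸ hT⟩
    have hL : ∑ i ∈ Finset.range (n - m + 1), marks T P Γ i
        = ((Finset.range (n - m + 1)).sigma (fun i =>
            Finset.univ.filter (fun j : Fin m =>
              if hj : i + j.val < n then T ⟨i + j.val, hj⟩ = P j ∧ P j ∈ Γ
              else False))).card := by
      rw [Finset.card_sigma]; rfl
    rw [hL, hR]
    apply Finset.card_le_card_of_injOn
      (fun x => (x.2, ⟨(x.1 + x.2.val) % n,
        Nat.mod_lt _ (Nat.lt_of_le_of_lt (Nat.zero_le _) (lt_of_lt_of_le x.2.isLt hmn))⟩))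
    · rintro ⟨i, j⟩ hx
      simp only [Finset.mem_coe, Finset.mem_sigma, Finset.mem_range, Finset.mem_filter,
        Finset.mem_univ, true_and] at hx
      obtain ⟨hi, hj⟩ := hx
      split_ifs at hj with h
      · simp only [hS, Finset.mem_coe, Finset.mem_filter, Finset.mem_univ, true_and]
        refine ⟨hj.2, ?_⟩
        rw [show (⟨(i + j.val) % n, _⟩ : Fin n) = ⟨i + j.val, h⟩ from
          Fin.ext (Nat.mod_eq_of_lt h)]
        exact hj.1
    · rintro ⟨i, j⟩ hx ⟨i', j'⟩ hx' h
      have hj : j = j' := congrArg Prod.fst h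
      have hp := congrArg (fun y : Fin m × Fin n => y.2.val) h
      cases hj
      have h1 : i + j.val < n := by
        have hj1 := (Finset.mem_filter.mp (Finset.mem_sigma.mp hx).2).2
        by_contra hc; rw [dif_neg hc] at hj1; exact hj1
      have h1' : i' + j.val < n := by
        have hj1 := (Finset.mem_filter.mp (Finset.mem_sigma.mp hx').2).2
        by_contra hc; rw [dif_neg hc] at hj1; exact hj1
      have hp' : (i + j.val) % n = (i' + j.val) % n := hp
      rw [Nat.mod_eq_of_lt h1, Nat.mod_eq_of_lt h1'] at hp'
      have : i = i' := by omega
      simp [this]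
  refine ⟨hmain, ?_⟩
  calc k * ((Finset.range (n - m + 1)).filter (fun i => k ≤ marks T P Γ i)).card
      ≤ ∑ i ∈ (Finset.range (n - m + 1)).filter (fun i => k ≤ marks T P Γ i),
          marks T P Γ i := by
        rw [mul_comm]
        exact Finset.card_nsmul_le_sum _ _ _ (fun i hi => (Finset.mem_filter.mp hi).2)
    _ ≤ ∑ i ∈ Finset.range (n - m + 1), marks T P Γ i :=
        Finset.sum_le_sum_of_subset (Finset.filter_subset _ _)
    _ ≤ _ := hmain
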